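/- Let F be a free group and fix, for each conjugacy class, a cyclically reduced representative. Then the chosen representatives of two conjugacy classes are equal as group elements if and only if the classes are equal, and every cyclically reduced element is a cyclic rotation (as a word) of the chosen representative of its class. -/

import Mathlib

open List
namespace CycRot
variable {α : Type*} [DecidableEq α]

def NC (a b : α × Bool) : Prop := ¬(a.1 = b.1 ∧ a.2 = !b.2)


lemma reduce_eq_iff_chain' (w : List (α × Bool)) :
    FreeGroup.reduce w = w ↔ List.Chain' NC w := by
  constructor
  · induction w with
    | nil => simp [List.Chain', List.isChain_nil]
    | cons a t ih =>
      intro h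
      rw [FreeGroup.reduce.cons] at h
      have hsub : (FreeGroup.reduce t).length ≤ t.length :=
        (FreeGroup.Red.sublist FreeGroup.reduce.red).length_le
      cases hrt : FreeGroup.reduce t with
      | nil =>
        rw [hrt] at h
        simp only [] at h
        obtain ⟨rfl⟩ : t = [] := by cases t <;> simp_all
        simp [List.Chain', List.isChain_singleton]
      | cons b t2 =>
        rw [hrt] at h
        simp only [] at h
        split_ifs at h with hc
        · exfalso
          rw [hrt] at hsub
          have hl := congrArg List.length h
          simp at hl hsub
          omega
        · have ht : t = b :: t2 := by
            exact ((List.cons.injEq a t a (b :: t2)).mp (by rw [h])).2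
          rw [ht]
          exact List.isChain_cons_cons.mpr ⟨hc, by rw [← ht]; exact ih (by rw [hrt, ht])⟩
  · intro h
    induction w with
    | nil => rfl
    | cons a t ih =>
      rw [FreeGroup.reduce.cons, ih h.tail]
      cases t with
      | nil => rfl
      | cons b t2 =>
        simp only []
        exact if_neg (List.isChain_cons_cons.mp h).1


omit [DecidableEq α] in
lemma invRev_cons (y : α × Bool) (p : List (α × Bool)) :
    FreeGroup.invRev (y :: p) = FreeGroup.invRev p ++ [(y.1, !y.2)] := by
  simp [FreeGroup.invRev]

omit [DecidableEq α] in
lemma chain'_triple {m : List (α × Bool)} (h : List.Chain' NC (m ++ m)) :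
    List.Chain' NC (m ++ m ++ m) := by
  cases m with
  | nil => simp [List.Chain', List.isChain_nil]
  | cons a t =>
    refine List.isChain_append.2 ?_
    refine ⟨h, (List.isChain_append.1 h).1, ?_⟩
    intro x hx y hy
    rw [List.getLast?_append_of_ne_nil _ (by simp)] at hx
    exact (List.isChain_append.1 h).2.2 x hx y hy

omit [DecidableEq α] in
lemma chain'_rotate_sq {m : List (α × Bool)} (h : List.Chain' NC (m ++ m)) (k : ℕ) :
    List.Chain' NC (m.rotate k ++ m.rotate k) := by
  rcases eq_or_ne m [] with rfl | hm
  · simp [List.Chain', List.isChain_nil]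
  have h3 := chain'_triple h
  set j := k % m.length with hj
  have hjle : j ≤ m.length := (Nat.mod_lt _ (List.length_pos_iff.2 hm)).le
  rw [← List.rotate_mod, ← hj, List.rotate_eq_drop_append_take hjle]
  refine h3.infix ⟨m.take j, m.drop j, ?_⟩
  simp only [← List.append_assoc, List.take_append_drop]
  simp [List.append_assoc, List.take_append_drop]



omit [DecidableEq α] in
lemma NC_of_ne {a b : α × Bool} (h : b ≠ (a.1, !a.2)) : NC a b := by
  rintro ⟨h1, h2⟩
  exact h (Prod.ext h1.symm (by rw [h2]; simp))

omit [DecidableEq α] in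
lemma NC_of_ne' {a b : α × Bool} (h : a ≠ (b.1, !b.2)) : NC (b.1, !b.2) (a.1, !a.2) := by
  rintro ⟨h1, h2⟩
  simp only [Bool.not_not] at h2
  exact h (Prod.ext h1.symm h2.symm)

omit [DecidableEq α] in
lemma NC_of_ne_pt {a b : α × Bool} (h : a ≠ b) : NC a (b.1, !b.2) := by
  rintro ⟨h1, h2⟩
  simp only [Bool.not_not] at h2
  exact h (Prod.ext h1 h2)

lemma toWord_eq_of_chain' {e : FreeGroup α} {T : List (α × Bool)}
    (h : e = FreeGroup.mk T) (hc : List.Chain' NC T) : e.toWord = T := by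
  rw [h, FreeGroup.toWord_mk, (reduce_eq_iff_chain' T).2 hc]

omit [DecidableEq α] in
lemma inv_single (x : α × Bool) : (FreeGroup.mk [x])⁻¹ = FreeGroup.mk [(x.1, !x.2)] := by
  rw [FreeGroup.inv_mk]; simp [FreeGroup.invRev]

lemma chain'_toWord (w : FreeGroup α) : List.Chain' NC w.toWord :=
  (reduce_eq_iff_chain' _).1 w.reduce_toWord

lemma key (r : FreeGroup α) (hr : List.Chain' NC (r.toWord ++ r.toWord)) :
    ∀ l : List (α × Bool), ∃ (p : List (α × Bool)) (k : ℕ),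
      (FreeGroup.mk l * r * (FreeGroup.mk l)⁻¹).toWord
        = p ++ r.toWord.rotate k ++ FreeGroup.invRev p := by
  intro l
  induction l with
  | nil =>
    refine ⟨[], 0, ?_⟩
    simp [← FreeGroup.one_eq_mk, FreeGroup.invRev]
  | cons x l ih =>
    obtain ⟨p, k, hw⟩ := ih
    set g' := FreeGroup.mk l with hg'
    set w := g' * r * g'⁻¹ with hwdef
    set x' : α × Bool := (x.1, !x.2) with hx'
    set m := r.toWord.rotate k with hmdef
    have hm2 : List.Chain' NC (m ++ m) := chain'_rotate_sq hr k
    have hW : List.Chain' NC w.toWord := chain'_toWord w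
    have hxinv : (FreeGroup.mk [x])⁻¹ = FreeGroup.mk [x'] := inv_single x
    have he2 : FreeGroup.mk (x :: l) * r * (FreeGroup.mk (x :: l))⁻¹
        = FreeGroup.mk [x] * w * FreeGroup.mk [x'] := by
      have h1 : FreeGroup.mk (x :: l) = FreeGroup.mk [x] * g' := by
        rw [hg', FreeGroup.mul_mk]; rfl
      rw [h1, hwdef, ← hxinv]; group
    cases p with
    | cons y p' =>
      set y' : α × Bool := (y.1, !y.2) with hy'
      have hWd : w.toWord = ((y :: p') ++ m ++ FreeGroup.invRev p') ++ [y'] := by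
        rw [hw, invRev_cons]; simp [List.append_assoc, hy']
      have hwgrp : w = FreeGroup.mk [y] * FreeGroup.mk (p' ++ m ++ FreeGroup.invRev p') *
          FreeGroup.mk [y'] := by
        conv_lhs => rw [← FreeGroup.mk_toWord (x := w), hWd]
        rw [FreeGroup.mul_mk, FreeGroup.mul_mk]; simp
      by_cases hxy : x = y'
      · -- cancellation with head of p
        have h1 : FreeGroup.mk [x] = (FreeGroup.mk [y])⁻¹ := by
          rw [hxy, hy', inv_single]
        have h2 : (FreeGroup.mk [x'] : FreeGroup α) = FreeGroup.mk [y] := by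
          have : x' = y := by rw [hx', hxy, hy']; simp
          rw [this]
        have h3 : (FreeGroup.mk [y'] : FreeGroup α) = (FreeGroup.mk [y])⁻¹ :=
          (inv_single y).symm
        have hT : FreeGroup.mk (x :: l) * r * (FreeGroup.mk (x :: l))⁻¹
            = FreeGroup.mk (p' ++ m ++ FreeGroup.invRev p') := by
          rw [he2, hwgrp, h1, h2, h3]; group
        have hchain : List.Chain' NC (p' ++ m ++ FreeGroup.invRev p') := by
          refine hW.infix ⟨[y], [y'], ?_⟩
          rw [hWd]; simp
        exact ⟨p', k, toWord_eq_of_chain' hT hchain⟩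
      · -- no cancellation: prepend/append
        have hT : FreeGroup.mk (x :: l) * r * (FreeGroup.mk (x :: l))⁻¹
            = FreeGroup.mk ([x] ++ w.toWord ++ [x']) := by
          rw [he2]
          conv_lhs => rw [← FreeGroup.mk_toWord (x := w)]
          rw [FreeGroup.mul_mk, FreeGroup.mul_mk]
        have hhead : w.toWord = y :: (p' ++ m ++ FreeGroup.invRev p' ++ [y']) := by
          rw [hWd]; simp [List.append_assoc]
        have hNCxy : NC x y := by
          intro ⟨h1, h2⟩
          exact hxy (Prod.ext h1 h2)
        have hNCyx : NC y' x' := NC_of_ne' hxy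
        have hchain : List.Chain' NC ([x] ++ w.toWord ++ [x']) := by
          rw [List.append_assoc]
          refine List.isChain_append.2 ⟨by simp [List.Chain', List.isChain_singleton], ?_, ?_⟩
          · refine List.isChain_append.2 ⟨hW, by simp [List.Chain', List.isChain_singleton], ?_⟩
            intro a ha b hb
            simp only [List.head?_cons, Option.mem_def, Option.some.injEq] at hb
            rw [hWd, List.getLast?_concat] at ha
            simp only [Option.mem_def, Option.some.injEq] at ha
            subst ha; subst hb; exact hNCyx
          · intro a ha b hb
            simp only [List.getLast?_singleton, Option.mem_def, Option.some.injEq] at ha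
            rw [hhead] at hb
            simp only [List.cons_append, List.head?_cons, Option.mem_def,
              Option.some.injEq] at hb
            subst ha; subst hb; exact hNCxy
        refine ⟨x :: (y :: p'), k, ?_⟩
        rw [toWord_eq_of_chain' hT hchain, invRev_cons x (y :: p'), hw]
        simp [List.append_assoc, hx', hmdef]
    | nil =>
      have hWm : w.toWord = m := by rw [hw]; simp [FreeGroup.invRev]
      cases hmc : m with
      | nil =>
        have hw1 : w = 1 := by rw [← FreeGroup.toWord_eq_nil_iff, hWm, hmc]
        refine ⟨[], k, ?_⟩
        rw [he2, hw1]
        have : FreeGroup.mk [x] * 1 * FreeGroup.mk [x'] = 1 := by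
          rw [← hxinv]; group
        rw [this]
        simp [← hmdef, hmc, FreeGroup.invRev]
      | cons z m₁ =>
        have hwgrp : w = FreeGroup.mk [z] * FreeGroup.mk m₁ := by
          conv_lhs => rw [← FreeGroup.mk_toWord (x := w), hWm, hmc]
          rw [FreeGroup.mul_mk]; rfl
        by_cases hz : z = x'
        · -- head cancellation
          have hT : FreeGroup.mk (x :: l) * r * (FreeGroup.mk (x :: l))⁻¹
              = FreeGroup.mk (m₁ ++ [z]) := by
            rw [he2, hwgrp, hz, ← FreeGroup.mul_mk, ← hxinv]; group
          have hchain : List.Chain' NC (m₁ ++ [z]) := by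
            refine hm2.infix ⟨[z], m₁, ?_⟩
            rw [hmc]; simp
          refine ⟨[], k + 1, ?_⟩
          have hrot : m₁ ++ [z] = r.toWord.rotate (k + 1) := by
            rw [← List.rotate_rotate, ← hmdef, hmc, List.rotate_cons_succ]
            simp
          rw [toWord_eq_of_chain' hT hchain, hrot]
          simp [FreeGroup.invRev]
        · obtain ⟨m₂, z₂, hm22⟩ : ∃ m₂ z₂, m = m₂ ++ [z₂] :=
            ⟨m.dropLast, m.getLast (by rw [hmc]; simp), by
              rw [List.dropLast_append_getLast]⟩
          have hwgrp2 : w = FreeGroup.mk m₂ * FreeGroup.mk [z₂] := by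
            conv_lhs => rw [← FreeGroup.mk_toWord (x := w), hWm, hm22]
            rw [FreeGroup.mul_mk]
          by_cases hz2 : z₂ = x
          · -- tail cancellation
            have hT : FreeGroup.mk (x :: l) * r * (FreeGroup.mk (x :: l))⁻¹
                = FreeGroup.mk (z₂ :: m₂) := by
              rw [he2, hwgrp2, hz2, ← hxinv,
                show (x :: m₂ : List (α × Bool)) = [x] ++ m₂ from rfl,
                ← FreeGroup.mul_mk]
              group
            have hchain : List.Chain' NC (z₂ :: m₂) := by
              refine hm2.infix ⟨m₂, [z₂], ?_⟩
              rw [hm22]; simp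
            refine ⟨[], k + m₂.length, ?_⟩
            have hrot : z₂ :: m₂ = r.toWord.rotate (k + m₂.length) := by
              rw [← List.rotate_rotate, ← hmdef,
                List.rotate_eq_drop_append_take (by rw [hm22]; simp), hm22,
                List.drop_left, List.take_left]
              rfl
            rw [toWord_eq_of_chain' hT hchain, hrot]
            simp [FreeGroup.invRev]
          · -- no cancellation
            have hT : FreeGroup.mk (x :: l) * r * (FreeGroup.mk (x :: l))⁻¹
                = FreeGroup.mk ([x] ++ m ++ [x']) := by
              rw [he2]
              conv_lhs => rw [← FreeGroup.mk_toWord (x := w), hWm]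
              rw [FreeGroup.mul_mk, FreeGroup.mul_mk]
            have hNCxz : NC x z := NC_of_ne hz
            have hNCz2x : NC z₂ x' := NC_of_ne_pt hz2
            have hchain : List.Chain' NC ([x] ++ m ++ [x']) := by
              rw [List.append_assoc]
              refine List.isChain_append.2 ⟨by simp [List.Chain', List.isChain_singleton], ?_, ?_⟩
              · refine List.isChain_append.2 ⟨(List.isChain_append.1 hm2).1, by simp [List.Chain', List.isChain_singleton], ?_⟩
                intro a ha b hb
                simp only [List.head?_cons, Option.mem_def, Option.some.injEq] at hb
                rw [hm22, List.getLast?_concat] at ha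
                simp only [Option.mem_def, Option.some.injEq] at ha
                subst ha; subst hb; exact hNCz2x
              · intro a ha b hb
                simp only [List.getLast?_singleton, Option.mem_def, Option.some.injEq] at ha
                rw [hmc] at hb
                simp only [List.cons_append, List.head?_cons, Option.mem_def,
                  Option.some.injEq] at hb
                subst ha; subst hb; exact hNCxz
            refine ⟨[x], k, ?_⟩
            rw [toWord_eq_of_chain' hT hchain, ← hmdef]
            simp [FreeGroup.invRev, hx']

end CycRot

/-- An element of a free group is cyclically reduced if the concatenation of its
reduced word with itself is still reduced. -/
def FreeGroup.IsCyclicallyReducedElt {α : Type*} [DecidableEq α] (w : FreeGroup α) : Prop :=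
  FreeGroup.reduce (w.toWord ++ w.toWord) = w.toWord ++ w.toWord

/-- Given a choice of a cyclically reduced representative in each conjugacy class of a
free group: representatives of two classes agree iff the classes agree, and every
cyclically reduced element is a cyclic rotation (as a word) of the representative of
its conjugacy class. -/
theorem freeGroup_cyclicallyReduced_representatives {α : Type*} [DecidableEq α]
    (rep : ConjClasses (FreeGroup α) → FreeGroup α)
    (hrep : ∀ c, FreeGroup.IsCyclicallyReducedElt (rep c) ∧ ConjClasses.mk (rep c) = c) :
    (∀ c₁ c₂, rep c₁ = rep c₂ ↔ c₁ = c₂) ∧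
      ∀ c : FreeGroup α, FreeGroup.IsCyclicallyReducedElt c →
        ∃ k, c.toWord = (rep (ConjClasses.mk c)).toWord.rotate k := by
  constructor
  · intro c₁ c₂
    refine ⟨fun h => ?_, fun h => by rw [h]⟩
    rw [← (hrep c₁).2, ← (hrep c₂).2, h]
  · intro c hc
    set q := ConjClasses.mk c with hq
    obtain ⟨h1, h2⟩ := hrep q
    have hconj : IsConj (rep q) c := ConjClasses.mk_eq_mk_iff_isConj.1 (h2.trans hq)
    obtain ⟨g, hg⟩ := isConj_iff.1 hconj
    have hr : List.Chain' CycRot.NC ((rep q).toWord ++ (rep q).toWord) :=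
      (CycRot.reduce_eq_iff_chain' _).1 h1
    obtain ⟨p, k, hw⟩ := CycRot.key (rep q) hr g.toWord
    rw [FreeGroup.mk_toWord, hg] at hw
    cases p with
    | nil =>
      refine ⟨k, ?_⟩
      simpa [FreeGroup.invRev] using hw
    | cons y p' =>
      exfalso
      have hcc : List.Chain' CycRot.NC (c.toWord ++ c.toWord) :=
        (CycRot.reduce_eq_iff_chain' _).1 hc
      have hlast : c.toWord.getLast? = some (y.1, !y.2) := by
        rw [hw, CycRot.invRev_cons, ← List.append_assoc, List.getLast?_concat]
      have hhead : c.toWord.head? = some y := by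
        rw [hw]
        simp
      have := (List.isChain_append.1 hcc).2.2 (y.1, !y.2) hlast y hhead
      exact this ⟨rfl, rfl⟩
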